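/- Let φ₁, ..., φₙ ∈ ℝ^d be vectors such that Rₙ := (1/n)Σ_{t=1}^n φ_t φ_tᵀ is positive definite, let ε₁, ..., εₙ ∈ {−1, +1}, and let Q := (1/n)Σ_{t=1}^n ε_t φ_t φ_tᵀ. Then Rₙ ⪰ Q Rₙ⁻¹ Q in the Löwner partial ordering, i.e., the matrix Rₙ − Q Rₙ⁻¹ Q is positive semidefinite. -/

import Mathlib

open Matrix

noncomputable section

lemma sum_mulVec' {d : ℕ} {ι : Type*} (s : Finset ι)
    (M : ι → Matrix (Fin d) (Fin d) ℝ) (z : Fin d → ℝ) :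
    (∑ t ∈ s, M t) *ᵥ z = ∑ t ∈ s, M t *ᵥ z :=
  map_sum (mulVec.addMonoidHomLeft z) M s

lemma dot_sum' {d : ℕ} {ι : Type*} (s : Finset ι)
    (w : ι → Fin d → ℝ) (z : Fin d → ℝ) :
    z ⬝ᵥ (∑ t ∈ s, w t) = ∑ t ∈ s, z ⬝ᵥ w t := by
  simp only [dotProduct, Finset.sum_apply, Finset.mul_sum]
  exact Finset.sum_comm

lemma quad_vmv {d : ℕ} (v x : Fin d → ℝ) :
    x ⬝ᵥ (vecMulVec v v) *ᵥ x = (v ⬝ᵥ x) * (v ⬝ᵥ x) := by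
  have h : (vecMulVec v v) *ᵥ x = (v ⬝ᵥ x) • v := by
    ext i
    simp only [mulVec, dotProduct, vecMulVec_apply, Pi.smul_apply, smul_eq_mul,
      Finset.sum_mul]
    exact Finset.sum_congr rfl fun j _ => by ring
  rw [h, dotProduct_smul, smul_eq_mul, dotProduct_comm]

lemma vmv_symm {d : ℕ} (v : Fin d → ℝ) : (vecMulVec v v)ᵀ = vecMulVec v v := by
  ext i j; simp [vecMulVec_apply, transpose_apply, mul_comm]

/-- **Lemma 4 (Löwner ordering).** With `Rₙ = (1/n) Σ φ_t φ_tᵀ` positive definite and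
`Q = (1/n) Σ ε_t φ_t φ_tᵀ` for signs `ε_t ∈ {−1, +1}`, we have `Rₙ ⪰ Q Rₙ⁻¹ Q`, i.e.,
`Rₙ − Q Rₙ⁻¹ Q` is positive semidefinite. -/
theorem lowner_ordering
    (d n : ℕ) (hn : 0 < n)
    (φ : Fin n → Fin d → ℝ) (ε : Fin n → ℝ)
    (hε : ∀ t, ε t = 1 ∨ ε t = -1)
    (Rn Q : Matrix (Fin d) (Fin d) ℝ)
    (hRn : Rn = (n : ℝ)⁻¹ • ∑ t, vecMulVec (φ t) (φ t))
    (hQ : Q = (n : ℝ)⁻¹ • ∑ t, ε t • vecMulVec (φ t) (φ t))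
    (hPD : Rn.PosDef) :
    (Rn - Q * Rn⁻¹ * Q).PosSemidef := by
  have hninv : (0:ℝ) ≤ (n : ℝ)⁻¹ := by positivity
  have hQsym : Qᵀ = Q := by
    rw [hQ]
    simp [transpose_smul, transpose_sum, vmv_symm]
  have hRsym : Rnᵀ = Rn := hPD.isHermitian
  have hRinvSym : (Rn⁻¹)ᵀ = Rn⁻¹ := by
    rw [transpose_nonsing_inv, hRsym]
  have hunit : IsUnit Rn.det := isUnit_iff_ne_zero.2 hPD.det_pos.ne'
  have hRRinv : Rn * Rn⁻¹ = 1 := mul_nonsing_inv Rn hunit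
  -- quadratic forms of Rn ± Q are nonneg
  have hpm : ∀ (s : ℝ), s = 1 ∨ s = -1 → ∀ z : Fin d → ℝ,
      0 ≤ z ⬝ᵥ (Rn + s • Q) *ᵥ z := by
    intro s hs z
    have hcalc : z ⬝ᵥ (Rn + s • Q) *ᵥ z
        = (n:ℝ)⁻¹ * ∑ t, (1 + s * ε t) * ((φ t ⬝ᵥ z) * (φ t ⬝ᵥ z)) := by
      rw [hRn, hQ]
      simp only [add_mulVec, smul_mulVec, dotProduct_add, dotProduct_smul,
        sum_mulVec', dot_sum', smul_eq_mul, Finset.mul_sum]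
      rw [← Finset.sum_add_distrib]
      refine Finset.sum_congr rfl fun t _ => ?_
      simp only [smul_mulVec, dotProduct_smul, smul_eq_mul, quad_vmv]
      ring
    rw [hcalc]
    apply mul_nonneg hninv
    apply Finset.sum_nonneg
    intro t _
    apply mul_nonneg _ (mul_self_nonneg _)
    rcases hε t with h | h <;> rcases hs with h' | h' <;> rw [h, h'] <;> norm_num
  rw [posSemidef_iff_dotProduct_mulVec]
  constructor
  · show (Rn - Q * Rn⁻¹ * Q)ᵀ = _
    rw [transpose_sub, hRsym, transpose_mul, transpose_mul, hQsym, hRinvSym]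
    rw [Matrix.mul_assoc]
  · intro x
    simp only [RCLike.star_def, star_trivial]
    set y := Rn⁻¹ *ᵥ (Q *ᵥ x) with hy
    have hRy : Rn *ᵥ y = Q *ᵥ x := by
      rw [hy, mulVec_mulVec, hRRinv, one_mulVec]
    have hxQy : x ⬝ᵥ Q *ᵥ y = y ⬝ᵥ Q *ᵥ x := by
      rw [dotProduct_mulVec, ← mulVec_transpose, hQsym, dotProduct_comm]
    have key : x ⬝ᵥ (Rn - Q * Rn⁻¹ * Q) *ᵥ x
        = (1/2) * ((x+y) ⬝ᵥ (Rn + (-1:ℝ) • Q) *ᵥ (x+y))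
        + (1/2) * ((x-y) ⬝ᵥ (Rn + (1:ℝ) • Q) *ᵥ (x-y)) := by
      have h1 : (Q * Rn⁻¹ * Q) *ᵥ x = Q *ᵥ y := by
        rw [hy, mulVec_mulVec, mulVec_mulVec, Matrix.mul_assoc]
      have h2 : x ⬝ᵥ Rn *ᵥ y = x ⬝ᵥ Q *ᵥ x := by rw [hRy]
      have h3 : y ⬝ᵥ Rn *ᵥ y = y ⬝ᵥ Q *ᵥ x := by rw [hRy]
      have h4 : y ⬝ᵥ Rn *ᵥ x = x ⬝ᵥ Q *ᵥ x := by
        rw [dotProduct_mulVec, ← mulVec_transpose, hRsym, dotProduct_comm, h2]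
      simp only [sub_mulVec, add_mulVec, mulVec_add, mulVec_sub, smul_mulVec, dotProduct_add,
        dotProduct_sub, add_dotProduct, sub_dotProduct, dotProduct_smul, smul_eq_mul,
        neg_one_mul, one_mul, h1, h2, h3, h4, hxQy]
      ring
    rw [key]
    have hA := hpm (-1) (Or.inr rfl) (x+y)
    have hB := hpm 1 (Or.inl rfl) (x-y)
    linarith

end
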